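/- Let y̅ ∈ D ⊆ ℝ^s with D closed, and define iterated tangent cones by T⁰_D(y̅) := T_D(y̅) and T^k_D(y̅; v₁,…,v_k) := T_{T^{k−1}_D(y̅; v₁,…,v_{k−1})}(v_k) for k ≥ 1. Then for every collection of directions v₁,…,v_l ∈ ℝ^s one has the chain of inclusions N̂_{T^{l−1}_D(y̅;v₁,…,v_{l−1})}(v_l) ⊆ N_{T^{l−1}_D(y̅;v₁,…,v_{l−1})}(v_l) ⊆ N_{T_D(y̅)}(0) ⊆ N_D(y̅). -/

import Mathlib

open Set Filter Topology Metric Pointwise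

noncomputable section

abbrev Rd (d : ℕ) := EuclideanSpace ℝ (Fin d)

/-- Tangent (contingent) cone: w such that ∃ t_k ↓ 0, w_k → w with z + t_k w_k ∈ Ω. -/
def tangentConeSeq {E : Type*} [NormedAddCommGroup E] [NormedSpace ℝ E]
    (Ω : Set E) (z : E) : Set E :=
  {w | ∃ t : ℕ → ℝ, ∃ wk : ℕ → E,
    (∀ k, 0 < t k) ∧ Tendsto t atTop (nhds 0) ∧
    Tendsto wk atTop (nhds w) ∧ ∀ k, z + t k • wk k ∈ Ω}

/-- Regular (Fréchet) normal cone: polar of the tangent cone (empty outside Ω). -/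
def regNormal {E : Type*} [NormedAddCommGroup E] [InnerProductSpace ℝ E]
    (Ω : Set E) (z : E) : Set E :=
  {v | z ∈ Ω ∧ ∀ w ∈ tangentConeSeq Ω z, (inner ℝ v w : ℝ) ≤ 0}

/-- Limiting (Mordukhovich) normal cone. -/
def limNormal {E : Type*} [NormedAddCommGroup E] [InnerProductSpace ℝ E]
    (Ω : Set E) (z : E) : Set E :=
  {v | ∃ zk vk : ℕ → E, (∀ k, zk k ∈ Ω) ∧ (∀ k, vk k ∈ regNormal Ω (zk k)) ∧
    Tendsto zk atTop (nhds z) ∧ Tendsto vk atTop (nhds v)}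

/-- Polar cone of a set. -/
def polarCone {E : Type*} [NormedAddCommGroup E] [InnerProductSpace ℝ E]
    (K : Set E) : Set E :=
  {v | ∀ w ∈ K, (inner ℝ v w : ℝ) ≤ 0}

/-- Lsp(C): largest subspace L with C + L ⊆ C (the union of all such subspaces). -/
def Lsp {E : Type*} [NormedAddCommGroup E] [NormedSpace ℝ E] (C : Set E) : Set E :=
  {l | ∃ L : Submodule ℝ E, (∀ c ∈ C, ∀ x ∈ L, c + x ∈ C) ∧ l ∈ L}

/-- A cone: closed under multiplication by nonnegative scalars. -/
def IsCone {E : Type*} [NormedAddCommGroup E] [NormedSpace ℝ E] (C : Set E) : Prop :=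
  ∀ c ∈ C, ∀ t : ℝ, 0 ≤ t → t • c ∈ C

/-- Metric subregularity of a set-valued map M at (z, w) ∈ Gr M. -/
def MetricallySubregular {E F : Type*} [NormedAddCommGroup E] [NormedSpace ℝ E]
    [NormedAddCommGroup F] [NormedSpace ℝ F] (M : E → Set F) (z : E) (w : F) : Prop :=
  w ∈ M z ∧ ∃ κ > (0:ℝ), ∃ U ∈ nhds z, ∀ z' ∈ U,
    infDist z' {x | w ∈ M x} ≤ κ * infDist w (M z')

/-- Convex polyhedral: finite intersection of closed halfspaces. -/
def IsConvexPolyhedral {E : Type*} [NormedAddCommGroup E] [NormedSpace ℝ E]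
    (C : Set E) : Prop :=
  ∃ (n : ℕ) (a : Fin n → (E →L[ℝ] ℝ)) (α : Fin n → ℝ), C = {z | ∀ i, a i z ≤ α i}

/-- Polyhedral: finite union of convex polyhedral sets. -/
def IsPolyhedral {E : Type*} [NormedAddCommGroup E] [NormedSpace ℝ E]
    (C : Set E) : Prop :=
  ∃ (n : ℕ) (Ci : Fin n → Set E), (∀ i, IsConvexPolyhedral (Ci i)) ∧ C = ⋃ i, Ci i

/-- Locally polyhedral near a point. -/
def LocallyPolyhedral {E : Type*} [NormedAddCommGroup E] [NormedSpace ℝ E]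
    (Ω : Set E) (z : E) : Prop :=
  ∃ W ∈ nhds z, ∃ C : Set E, IsPolyhedral C ∧ Ω ∩ W = C ∩ W

/-- Normal cone of convex analysis. -/
def convNormal {E : Type*} [NormedAddCommGroup E] [InnerProductSpace ℝ E]
    (K : Set E) (v : E) : Set E :=
  {z | v ∈ K ∧ ∀ w ∈ K, (inner ℝ z (w - v) : ℝ) ≤ 0}

/-- Regular normal cone for subsets of a product of inner product spaces
(with the natural product inner product in the pairing). -/
def regNormal2 {E F : Type*} [NormedAddCommGroup E] [InnerProductSpace ℝ E]
    [NormedAddCommGroup F] [InnerProductSpace ℝ F] (Ω : Set (E × F)) (z : E × F) :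
    Set (E × F) :=
  {v | z ∈ Ω ∧ ∀ w ∈ tangentConeSeq Ω z,
    (inner ℝ v.1 w.1 : ℝ) + (inner ℝ v.2 w.2 : ℝ) ≤ 0}

/-- Iterated tangent cones: the head of the list is the most recent direction,
so `iterTangent D y [vₗ, …, v₁] = T^{l}_D(y; v₁,…,vₗ)`. -/
def iterTangent {E : Type*} [NormedAddCommGroup E] [NormedSpace ℝ E]
    (D : Set E) (y : E) : List E → Set E
  | [] => tangentConeSeq D y
  | v :: vs => tangentConeSeq (iterTangent D y vs) v
section Aux

variable {E : Type*} [NormedAddCommGroup E] [NormedSpace ℝ E]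

/-- positive scaling stays in the tangent cone -/
lemma tangent_smul_mem {Ω : Set E} {z w : E} (hw : w ∈ tangentConeSeq Ω z)
    {c : ℝ} (hc : 0 < c) : c • w ∈ tangentConeSeq Ω z := by
  obtain ⟨t, wk, hpos, ht0, hwk, hmem⟩ := hw
  refine ⟨fun k => t k / c, fun k => c • wk k, fun k => div_pos (hpos k) hc,
    ?_, tendsto_const_nhds.smul hwk, fun k => ?_⟩
  · simpa using ht0.div_const c
  · have h : (t k / c) • c • wk k = t k • wk k := by
      rw [smul_smul, div_mul_cancel₀ _ hc.ne']
    rw [h]; exact hmem k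

/-- the tangent cone (of any set) is sequentially closed -/
lemma tangent_isSeqClosed (Ω : Set E) (z : E) : IsSeqClosed (tangentConeSeq Ω z) := by
  intro u x hu hux
  choose t W hpos h0 hW hmem using hu
  have hsel : ∀ j : ℕ, ∃ k, t j k < 1 / (j + 1 : ℝ) ∧ dist (W j k) (u j) < 1 / (j + 1 : ℝ) := by
    intro j
    have h1 := (Metric.tendsto_atTop.1 (h0 j)) (1 / (j + 1 : ℝ)) (by positivity)
    have h2 := (Metric.tendsto_atTop.1 (hW j)) (1 / (j + 1 : ℝ)) (by positivity)
    obtain ⟨N1, hN1⟩ := h1; obtain ⟨N2, hN2⟩ := h2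
    refine ⟨max N1 N2, ?_, hN2 _ (le_max_right _ _)⟩
    have := hN1 (max N1 N2) (le_max_left _ _)
    rw [Real.dist_eq, sub_zero, abs_of_pos (hpos _ _)] at this
    exact this
  choose k hk1 hk2 using hsel
  refine ⟨fun j => t j (k j), fun j => W j (k j), fun j => hpos _ _, ?_, ?_, fun j => hmem _ _⟩
  · refine squeeze_zero (fun j => (hpos _ _).le) (fun j => (hk1 j).le) ?_
    exact tendsto_one_div_add_atTop_nhds_zero_nat
  · rw [tendsto_iff_dist_tendsto_zero]
    refine squeeze_zero (fun j => dist_nonneg) (fun j => ?_)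
      ((tendsto_one_div_add_atTop_nhds_zero_nat.add
        (tendsto_iff_dist_tendsto_zero.1 hux)).mono_right (by simp))
    calc dist (W j (k j)) x ≤ dist (W j (k j)) (u j) + dist (u j) x := dist_triangle _ _ _
      _ ≤ 1 / (j + 1 : ℝ) + dist (u j) x := by linarith [hk2 j]

lemma tangent_isClosed (Ω : Set E) (z : E) : IsClosed (tangentConeSeq Ω z) :=
  (tangent_isSeqClosed Ω z).isClosed

/-- tangent cone is invariant under positive scaling of the base point, for cones -/
lemma tangent_base_smul_subset {K : Set E} (hK : ∀ w ∈ K, ∀ c : ℝ, 0 < c → c • w ∈ K)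
    (x : E) {c : ℝ} (hc : 0 < c) :
    tangentConeSeq K x ⊆ tangentConeSeq K (c • x) := by
  rintro w ⟨t, wk, hpos, ht0, hwk, hmem⟩
  refine ⟨fun k => c * t k, wk, fun k => mul_pos hc (hpos k), ?_, hwk, fun k => ?_⟩
  · simpa using ht0.const_mul c
  · have h : c • x + (c * t k) • wk k = c • (x + t k • wk k) := by
      rw [smul_add, smul_smul]
    rw [h]; exact hK _ (hmem k) c hc

lemma tangent_base_smul {K : Set E} (hK : ∀ w ∈ K, ∀ c : ℝ, 0 < c → c • w ∈ K)
    (x : E) {c : ℝ} (hc : 0 < c) :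
    tangentConeSeq K (c • x) = tangentConeSeq K x := by
  refine le_antisymm ?_ (tangent_base_smul_subset hK x hc)
  have h := tangent_base_smul_subset hK (c • x) (inv_pos.2 hc)
  rwa [inv_smul_smul₀ hc.ne'] at h

end Aux

section AuxInner

variable {E : Type*} [NormedAddCommGroup E] [InnerProductSpace ℝ E]

lemma regNormal_subset_limNormal (Ω : Set E) (z : E) :
    regNormal Ω z ⊆ limNormal Ω z := fun v hv =>
  ⟨fun _ => z, fun _ => v, fun _ => hv.1, fun _ => hv, tendsto_const_nhds, tendsto_const_nhds⟩

lemma regNormal_smul {Ω : Set E} {z v : E} (hv : v ∈ regNormal Ω z) {a : ℝ} (ha : 0 ≤ a) :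
    a • v ∈ regNormal Ω z := by
  refine ⟨hv.1, fun w hw => ?_⟩
  rw [real_inner_smul_left]
  exact mul_nonpos_of_nonneg_of_nonpos ha (hv.2 w hw)

lemma regNormal_base_smul {K : Set E} (hK : ∀ w ∈ K, ∀ c : ℝ, 0 < c → c • w ∈ K)
    (x : E) {c : ℝ} (hc : 0 < c) :
    regNormal K (c • x) = regNormal K x := by
  have hmemiff : c • x ∈ K ↔ x ∈ K := by
    constructor
    · intro h
      have := hK _ h c⁻¹ (inv_pos.2 hc)
      rwa [inv_smul_smul₀ hc.ne'] at this
    · exact fun h => hK _ h c hc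
  unfold regNormal
  rw [tangent_base_smul hK x hc]
  ext v; simp [hmemiff]

/-- limiting normal cone of a cone at any point is contained in the one at 0 -/
lemma limNormal_cone_subset {K : Set E} (hK : ∀ w ∈ K, ∀ c : ℝ, 0 < c → c • w ∈ K)
    (x : E) : limNormal K x ⊆ limNormal K 0 := by
  rintro v ⟨zk, vk, hzk, hvk, hz, hv⟩
  refine ⟨fun k => ((k : ℝ) + 1)⁻¹ • zk k, vk, fun k => hK _ (hzk k) _ (by positivity),
    fun k => ?_, ?_, hv⟩
  · rw [regNormal_base_smul hK (zk k) (by positivity : (0:ℝ) < ((k:ℝ)+1)⁻¹)]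
    exact hvk k
  · have h1 : Tendsto (fun k : ℕ => ((k : ℝ) + 1)⁻¹) atTop (𝓝 0) := by
      simpa [one_div] using tendsto_one_div_add_atTop_nhds_zero_nat (𝕜 := ℝ)
    simpa using h1.smul hz

/-- the limiting normal cone is sequentially closed -/
lemma mem_limNormal_of_tendsto {Ω : Set E} {z v : E} {v' : ℕ → E}
    (hv' : ∀ k, v' k ∈ limNormal Ω z) (hlim : Tendsto v' atTop (𝓝 v)) :
    v ∈ limNormal Ω z := by
  choose Z N h1 h2 h3 h4 using hv'
  have hsel : ∀ j : ℕ, ∃ k, dist (Z j k) z < 1 / (j + 1 : ℝ) ∧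
      dist (N j k) (v' j) < 1 / (j + 1 : ℝ) := by
    intro j
    obtain ⟨N1, hN1⟩ := (Metric.tendsto_atTop.1 (h3 j)) (1 / (j + 1 : ℝ)) (by positivity)
    obtain ⟨N2, hN2⟩ := (Metric.tendsto_atTop.1 (h4 j)) (1 / (j + 1 : ℝ)) (by positivity)
    exact ⟨max N1 N2, hN1 _ (le_max_left _ _), hN2 _ (le_max_right _ _)⟩
  choose k hk1 hk2 using hsel
  refine ⟨fun j => Z j (k j), fun j => N j (k j), fun j => h1 _ _, fun j => h2 _ _, ?_, ?_⟩
  · rw [tendsto_iff_dist_tendsto_zero]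
    refine squeeze_zero (fun j => dist_nonneg) (fun j => (hk1 j).le) ?_
    exact tendsto_one_div_add_atTop_nhds_zero_nat
  · rw [tendsto_iff_dist_tendsto_zero]
    refine squeeze_zero (fun j => dist_nonneg) (fun j => ?_)
      ((tendsto_one_div_add_atTop_nhds_zero_nat.add
        (tendsto_iff_dist_tendsto_zero.1 hlim)).mono_right (by simp))
    calc dist (N j (k j)) v ≤ dist (N j (k j)) (v' j) + dist (v' j) v := dist_triangle _ _ _
      _ ≤ 1 / (j + 1 : ℝ) + dist (v' j) v := by linarith [hk2 j]

/-- a nearest point yields a (proximal ⊆) regular normal -/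
lemma prox_mem_regNormal {D : Set E} {p c : E} (hc : c ∈ D)
    (hmin : ∀ x ∈ D, dist p c ≤ dist p x) : p - c ∈ regNormal D c := by
  refine ⟨hc, ?_⟩
  rintro w ⟨t, wk, hpos, ht0, hwk, hmem⟩
  have key : ∀ k, (inner ℝ (p - c) (wk k) : ℝ) ≤ t k * ‖wk k‖ ^ 2 / 2 := by
    intro k
    have h := hmin _ (hmem k)
    rw [dist_eq_norm, dist_eq_norm] at h
    have h2 : p - (c + t k • wk k) = (p - c) - t k • wk k := by abel
    rw [h2] at h
    have hsq : ‖p - c‖ ^ 2 ≤ ‖(p - c) - t k • wk k‖ ^ 2 := by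
      have := norm_nonneg ((p - c) - t k • wk k)
      nlinarith [norm_nonneg (p - c)]
    have hexp : ‖(p - c) - t k • wk k‖ ^ 2
        = ‖p - c‖ ^ 2 - 2 * (t k * inner ℝ (p - c) (wk k)) + (t k * ‖wk k‖) ^ 2 := by
      rw [norm_sub_sq_real, real_inner_smul_right, norm_smul, Real.norm_eq_abs,
        abs_of_pos (hpos k)]
    rw [hexp] at hsq
    nlinarith [hpos k, sq_nonneg (t k)]
  have hL : Tendsto (fun k => (inner ℝ (p - c) (wk k) : ℝ)) atTop (𝓝 (inner ℝ (p - c) w)) :=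
    tendsto_const_nhds.inner hwk
  have hR : Tendsto (fun k => t k * ‖wk k‖ ^ 2 / 2) atTop (𝓝 0) := by
    have : Tendsto (fun k => t k * ‖wk k‖ ^ 2 / 2) atTop (𝓝 (0 * ‖w‖ ^ 2 / 2)) :=
      ((ht0.mul ((hwk.norm).pow 2)).div_const 2)
    simpa using this
  exact le_of_tendsto_of_tendsto' hL hR key

end AuxInner
section Key

variable {s : ℕ}

lemma key_step {S : Set (Rd s)} (hS : IsClosed S) (v : Rd s) {y w : Rd s}
    {t : ℕ → ℝ} {wk : ℕ → Rd s} (htpos : ∀ k, 0 < t k)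
    (ht0 : Tendsto t atTop (𝓝 0)) (hwk : Tendsto wk atTop (𝓝 w))
    (hmem : ∀ k, y + t k • wk k ∈ S) {ε : ℝ} (hε : 0 < ε) :
    ∃ d : Rd s, ‖d‖ ≤ 2 * ‖v‖ ∧ w + ε • d ∈ tangentConeSeq S y ∧
      ‖d‖ ^ 2 / 2 ≤ (inner ℝ v d : ℝ) ∧ v - d ∈ limNormal S y := by
  set x : ℕ → Rd s := fun k => y + t k • wk k with hxdef
  set p : ℕ → Rd s := fun k => x k + (ε * t k) • v with hpdef
  have hSne : S.Nonempty := ⟨x 0, hmem 0⟩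
  choose c hcS hcd using fun k => hS.exists_infDist_eq_dist hSne (p k)
  have hmin : ∀ k, ∀ z ∈ S, dist (p k) (c k) ≤ dist (p k) z := fun k z hz => by
    rw [← hcd k]; exact infDist_le_dist_of_mem hz
  have hpc : ∀ k, ‖p k - c k‖ ≤ ε * t k * ‖v‖ := by
    intro k
    have h := hmin k _ (hmem k)
    rw [dist_eq_norm, dist_eq_norm] at h
    calc ‖p k - c k‖ ≤ ‖p k - x k‖ := h
      _ = ‖(ε * t k) • v‖ := by simp [hpdef]
      _ = ε * t k * ‖v‖ := by
          rw [norm_smul, Real.norm_eq_abs, abs_of_pos (mul_pos hε (htpos k))]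
  set u : ℕ → Rd s := fun k => (t k)⁻¹ • (c k - y) with hudef
  have hcu : ∀ k, c k = y + t k • u k := by
    intro k
    rw [hudef]
    simp only [smul_smul, mul_inv_cancel₀ (htpos k).ne', one_smul]
    abel
  -- p k - c k = t k • a k  where a k = ε•v + (wk k - u k)
  set a : ℕ → Rd s := fun k => ε • v + (wk k - u k) with hadef
  have hpca : ∀ k, p k - c k = t k • a k := by
    intro k
    rw [hadef, hpdef, hxdef]
    simp only []
    rw [hcu k]
    simp only [smul_add, smul_sub, smul_smul]
    module
  have hna : ∀ k, ‖a k‖ ≤ ε * ‖v‖ := by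
    intro k
    have h := hpc k
    rw [hpca k, norm_smul, Real.norm_eq_abs, abs_of_pos (htpos k)] at h
    nlinarith [htpos k, norm_nonneg (a k)]
  have hdiffb : ∀ k, ‖wk k - u k‖ ≤ 2 * (ε * ‖v‖) := by
    intro k
    have h1 := hna k
    have h4 : ‖ε • v‖ = ε * ‖v‖ := by
      rw [norm_smul, Real.norm_eq_abs, abs_of_pos hε]
    have h2 : ‖wk k - u k‖ ≤ ‖a k‖ + ‖ε • v‖ := by
      have heq : wk k - u k = a k - ε • v := by rw [hadef]; module
      rw [heq]; exact norm_sub_le _ _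
    linarith
  -- inner product inequality:  inner ℝ v (u k - wk k) ≥ ‖wk k - u k‖^2/(2 ε)
  have hinner : ∀ k, ‖wk k - u k‖ ^ 2 / (2 * ε) ≤ (inner ℝ v (u k - wk k) : ℝ) := by
    intro k
    have h := hna k
    have hsq : ‖a k‖ ^ 2 ≤ (ε * ‖v‖) ^ 2 := by
      nlinarith [norm_nonneg (a k), mul_nonneg hε.le (norm_nonneg v)]
    have hexp : ‖a k‖ ^ 2 = (ε * ‖v‖) ^ 2 + 2 * (ε * inner ℝ v (wk k - u k)) + ‖wk k - u k‖ ^ 2 := by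
      rw [hadef]
      rw [norm_add_sq_real, real_inner_smul_left, norm_smul, Real.norm_eq_abs, abs_of_pos hε]
    have hflip : (inner ℝ v (u k - wk k) : ℝ) = -(inner ℝ v (wk k - u k) : ℝ) := by
      rw [(neg_sub (wk k) (u k)).symm, inner_neg_right]
    rw [hflip]
    rw [hexp] at hsq
    rw [div_le_iff₀ (by positivity)]
    nlinarith
  -- boundedness of u
  obtain ⟨C, hC⟩ : ∃ C, ∀ k, ‖wk k‖ ≤ C := by
    obtain ⟨C, hC⟩ := (hwk.norm).bddAbove_range
    exact ⟨C, fun k => hC ⟨k, rfl⟩⟩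
  have hub : ∀ k, u k ∈ Metric.closedBall (0 : Rd s) (C + 2 * (ε * ‖v‖)) := by
    intro k
    rw [Metric.mem_closedBall, dist_zero_right]
    have h1 := hdiffb k
    have : ‖u k‖ ≤ ‖wk k‖ + ‖wk k - u k‖ := by
      have := norm_sub_le (wk k) (wk k - u k)
      calc ‖u k‖ = ‖wk k - (wk k - u k)‖ := by congr 1; abel
        _ ≤ ‖wk k‖ + ‖wk k - u k‖ := norm_sub_le _ _
    linarith [hC k]
  obtain ⟨uε, -, φ, hφ, huφ⟩ := tendsto_subseq_of_bounded
    (Metric.isBounded_closedBall (x := (0:Rd s)) (r := C + 2 * (ε * ‖v‖))) hub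
  -- limits along the subsequence
  have htφ : Tendsto (fun i => t (φ i)) atTop (𝓝 0) := ht0.comp hφ.tendsto_atTop
  have hwφ : Tendsto (fun i => wk (φ i)) atTop (𝓝 w) := hwk.comp hφ.tendsto_atTop
  have huT : uε ∈ tangentConeSeq S y := by
    refine ⟨fun i => t (φ i), fun i => u (φ i), fun i => htpos _, htφ, huφ, fun i => ?_⟩
    rw [← hcu (φ i)]; exact hcS _
  have hlim1 : Tendsto (fun i => ‖wk (φ i) - u (φ i)‖) atTop (𝓝 ‖w - uε‖) :=
    (hwφ.sub huφ).norm
  have hlim2 : Tendsto (fun i => (inner ℝ v (u (φ i) - wk (φ i)) : ℝ)) atTop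
      (𝓝 (inner ℝ v (uε - w) : ℝ)) := tendsto_const_nhds.inner (huφ.sub hwφ)
  have hIlim : ‖w - uε‖ ^ 2 / (2 * ε) ≤ (inner ℝ v (uε - w) : ℝ) :=
    le_of_tendsto_of_tendsto' ((hlim1.pow 2).div_const (2 * ε)) hlim2
      (fun i => hinner (φ i))
  have hDlim : ‖w - uε‖ ≤ 2 * (ε * ‖v‖) :=
    le_of_tendsto' hlim1 (fun i => hdiffb (φ i))
  refine ⟨ε⁻¹ • (uε - w), ?_, ?_, ?_, ?_⟩
  · rw [norm_smul, Real.norm_eq_abs, abs_of_pos (inv_pos.2 hε)]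
    have : ‖uε - w‖ = ‖w - uε‖ := by rw [← norm_neg]; congr 1; abel
    rw [this, inv_mul_le_iff₀ hε]
    calc ‖w - uε‖ ≤ 2 * (ε * ‖v‖) := hDlim
      _ = ε * (2 * ‖v‖) := by ring
  · have : w + ε • ε⁻¹ • (uε - w) = uε := by
      rw [smul_smul, mul_inv_cancel₀ hε.ne', one_smul]; abel
    rw [this]; exact huT
  · have hnd : ‖ε⁻¹ • (uε - w)‖ = ε⁻¹ * ‖uε - w‖ := by
      rw [norm_smul, Real.norm_eq_abs, abs_of_pos (inv_pos.2 hε)]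
    have hni : (inner ℝ v (ε⁻¹ • (uε - w)) : ℝ) = ε⁻¹ * inner ℝ v (uε - w) :=
      real_inner_smul_right v _ _
    rw [hnd, hni]
    have hsymm : ‖uε - w‖ = ‖w - uε‖ := by rw [← norm_neg]; congr 1; abel
    rw [hsymm]
    rw [div_le_iff₀ (by positivity)] at hIlim ⊢
    have hε2 : (0:ℝ) < ε⁻¹ := inv_pos.2 hε
    calc (ε⁻¹ * ‖w - uε‖) ^ 2 = ε⁻¹ * ε⁻¹ * ‖w - uε‖ ^ 2 := by ring
      _ ≤ ε⁻¹ * ε⁻¹ * ((inner ℝ v (uε - w) : ℝ) * (2 * ε)) := by nlinarith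
      _ = ε⁻¹ * (inner ℝ v (uε-w) : ℝ) * 2 * (ε⁻¹ * ε) := by ring
      _ = ε⁻¹ * (inner ℝ v (uε-w) : ℝ) * 2 := by rw [inv_mul_cancel₀ hε.ne', mul_one]
  · -- v - d ∈ limNormal S y
    refine ⟨fun i => c (φ i), fun i => (ε * t (φ i))⁻¹ • (p (φ i) - c (φ i)),
      fun i => hcS _, fun i => ?_, ?_, ?_⟩
    · exact regNormal_smul (prox_mem_regNormal (hcS _)
        (fun z hz => hmin _ z hz)) (le_of_lt (inv_pos.2 (mul_pos hε (htpos _))))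
    · have : Tendsto (fun i => y + t (φ i) • u (φ i)) atTop (𝓝 (y + (0:ℝ) • uε)) :=
        tendsto_const_nhds.add (htφ.smul huφ)
      simp only [zero_smul, add_zero] at this
      refine this.congr (fun i => ?_)
      rw [← hcu]
    · have hνeq : ∀ i, (ε * t (φ i))⁻¹ • (p (φ i) - c (φ i))
          = v + ε⁻¹ • (wk (φ i) - u (φ i)) := by
        intro i
        rw [hpca, smul_smul]
        have hsc : (ε * t (φ i))⁻¹ * t (φ i) = ε⁻¹ := by
          rw [mul_inv, mul_assoc, inv_mul_cancel₀ (htpos (φ i)).ne', mul_one]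
        rw [hsc, hadef]
        simp only [smul_add, smul_smul, inv_mul_cancel₀ hε.ne', one_smul]
      have hlim : Tendsto (fun i => v + ε⁻¹ • (wk (φ i) - u (φ i))) atTop
          (𝓝 (v + ε⁻¹ • (w - uε))) :=
        tendsto_const_nhds.add (tendsto_const_nhds.smul (hwφ.sub huφ))
      have heq : v + ε⁻¹ • (w - uε) = v - ε⁻¹ • (uε - w) := by
        module
      rw [heq] at hlim
      exact (hlim.congr (fun i => (hνeq i).symm))

end Key
lemma key {S : Set (Rd s)} (hS : IsClosed S) {y w v : Rd s}
    (hv : v ∈ regNormal (tangentConeSeq S y) w) : v ∈ limNormal S y := by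
  obtain ⟨hwT, hpol⟩ := hv
  obtain ⟨t, wk, htpos, ht0, hwk, hmem⟩ := hwT
  have hstep := fun j : ℕ => key_step hS v htpos ht0 hwk hmem
    (ε := ((j : ℝ) + 1)⁻¹) (by positivity)
  choose d hd1 hd2 hd3 hd4 using hstep
  have hεlim : Tendsto (fun j : ℕ => ((j : ℝ) + 1)⁻¹) atTop (𝓝 0) := by
    simpa [one_div] using tendsto_one_div_add_atTop_nhds_zero_nat (𝕜 := ℝ)
  have hd0 : Tendsto d atTop (𝓝 (0 : Rd s)) := by
    apply tendsto_of_subseq_tendsto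
    intro ns hns
    have hball : ∀ n, d (ns n) ∈ Metric.closedBall (0 : Rd s) (2 * ‖v‖) := by
      intro n
      rw [Metric.mem_closedBall, dist_zero_right]
      exact hd1 (ns n)
    obtain ⟨L, -, φ, hφ, hLt⟩ := tendsto_subseq_of_bounded
      (Metric.isBounded_closedBall (x := (0:Rd s)) (r := 2 * ‖v‖)) hball
    refine ⟨φ, ?_⟩
    have hεφ : Tendsto (fun i => ((ns (φ i) : ℝ) + 1)⁻¹) atTop (𝓝 0) :=
      hεlim.comp ((hns.comp hφ.tendsto_atTop))
    have hLT : L ∈ tangentConeSeq (tangentConeSeq S y) w := by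
      refine ⟨fun i => ((ns (φ i) : ℝ) + 1)⁻¹, fun i => d (ns (φ i)),
        fun i => by positivity, hεφ, hLt, fun i => hd2 _⟩
    have h1 : (inner ℝ v L : ℝ) ≤ 0 := hpol L hLT
    have h2 : ‖L‖ ^ 2 / 2 ≤ (inner ℝ v L : ℝ) := by
      refine le_of_tendsto_of_tendsto' ((hLt.norm.pow 2).div_const 2)
        (tendsto_const_nhds.inner hLt) (fun i => hd3 _)
    have hL0 : L = 0 := by
      have : ‖L‖ ^ 2 ≤ 0 := by linarith
      have : ‖L‖ = 0 := by nlinarith [norm_nonneg L]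
      exact norm_eq_zero.1 this
    rw [hL0] at hLt
    exact hLt
  have hlim : Tendsto (fun j => v - d j) atTop (𝓝 v) := by
    simpa using tendsto_const_nhds.sub hd0
  exact mem_limNormal_of_tendsto (fun j => hd4 j) hlim

lemma limNormal_tangent_subset {S : Set (Rd s)} (hS : IsClosed S) (y z : Rd s) :
    limNormal (tangentConeSeq S y) z ⊆ limNormal S y := by
  rintro v ⟨zk, vk, hzk, hvk, hz, hv⟩
  exact mem_limNormal_of_tendsto (fun k => key hS (hvk k)) hv

lemma isClosed_iterTangent (D : Set (Rd s)) (y : Rd s) (vs : List (Rd s)) :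
    IsClosed (iterTangent D y vs) := by
  cases vs with
  | nil => exact tangent_isClosed D y
  | cons v' vs' => exact tangent_isClosed _ v'

lemma limNormal_iter_subset (D : Set (Rd s)) (y : Rd s) :
    ∀ (vs : List (Rd s)) (v : Rd s),
      limNormal (iterTangent D y vs) v ⊆ limNormal (tangentConeSeq D y) 0 := by
  intro vs
  induction vs with
  | nil =>
    intro v
    exact limNormal_cone_subset (fun w hw c hc => tangent_smul_mem hw hc) v
  | cons v' vs' ih =>
    intro v
    have h1 : limNormal (iterTangent D y (v' :: vs')) v ⊆ limNormal (iterTangent D y vs') v' :=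
      limNormal_tangent_subset (isClosed_iterTangent D y vs') v' v
    exact h1.trans (ih v')
theorem stmt8 {s : ℕ} (D : Set (Rd s)) (hD : IsClosed D) (y : Rd s) (hy : y ∈ D) :
    ∀ (vs : List (Rd s)) (v : Rd s),
      regNormal (iterTangent D y vs) v ⊆ limNormal (iterTangent D y vs) v ∧
      limNormal (iterTangent D y vs) v ⊆ limNormal (tangentConeSeq D y) 0 ∧
      limNormal (tangentConeSeq D y) 0 ⊆ limNormal D y := by
  intro vs v
  exact ⟨regNormal_subset_limNormal _ _, limNormal_iter_subset D y vs v,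
    limNormal_tangent_subset hD y 0⟩
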